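/- arXiv:1110.5305 — 3 statements merged into one kernel-verified Lean document; each statement's English description precedes it below -/
import Mathlib

section
/- Let A be an n×n real PSD matrix and S any n×ℓ real matrix. With C = A S and W = Sᵗ A S, the Nyström extension satisfies the identity C W† Cᵗ = A^{1/2} P_{A^{1/2} S} A^{1/2}, where P_{A^{1/2} S} is the orthogonal projection onto the column space of A^{1/2} S. -/
open Matrix
open scoped Matrix.Norms.L2Operator

open scoped ComplexOrder in
/-- The positive semidefinite square root of a positive semidefinite matrix
(restored: `Matrix.PosSemidef.sqrt` was removed from Mathlib; same definition as before). -/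
noncomputable def Matrix.PosSemidef.sqrt {n 𝕜 : Type*} [Fintype n] [DecidableEq n] [RCLike 𝕜]
    {A : Matrix n n 𝕜} (hA : A.PosSemidef) : Matrix n n 𝕜 :=
  (hA.1.eigenvectorUnitary : Matrix n n 𝕜) *
    diagonal (fun i => ((√(hA.1.eigenvalues i) : ℝ) : 𝕜)) *
    (star hA.1.eigenvectorUnitary : Matrix n n 𝕜)

open scoped Classical in
/-- Moore–Penrose pseudoinverse, defined via the four Penrose conditions. -/
noncomputable def pinv {m n : Type*} [Fintype m] [Fintype n] (M : Matrix m n ℝ) :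
    Matrix n m ℝ :=
  if h : ∃ X : Matrix n m ℝ,
      M * X * M = M ∧ X * M * X = X ∧ (M * X)ᵀ = M * X ∧ (X * M)ᵀ = X * M
  then h.choose else 0

open scoped Classical in
/-- `eigvalsDesc A i` is the `(i+1)`-st largest eigenvalue of `A` (0-based index `i`);
junk value `0` if `A` is not Hermitian or `i` is out of range. -/
noncomputable def eigvalsDesc {n : ℕ} (A : Matrix (Fin n) (Fin n) ℝ) (i : ℕ) : ℝ :=
  if h : A.IsHermitian ∧ i < n then
    h.1.eigenvalues (Tuple.sort h.1.eigenvalues (Fin.rev ⟨i, h.2⟩))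
  else 0

/-- The coherence of an `n × k` matrix: `(n/k)` times the maximal squared row norm. -/
noncomputable def coherence {n k : ℕ} (U : Matrix (Fin n) (Fin k) ℝ) : ℝ :=
  ((n : ℝ) / k) * ⨆ i : Fin n, ∑ j : Fin k, (U i j) ^ 2

/-- The `n × ℓ` matrix consisting of the first `ℓ` columns of the permutation matrix of `σ`
(column `j` is the standard basis vector `e_{σ j}`). -/
def sampleMatrix {n ℓ : ℕ} (hl : ℓ ≤ n) (σ : Equiv.Perm (Fin n)) :
    Matrix (Fin n) (Fin ℓ) ℝ :=
  Matrix.of fun i j => if σ (Fin.castLE hl j) = i then (1 : ℝ) else 0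

section PinvAux

variable {m n : Type*} [Fintype m] [Fintype n]

/-- The four Penrose conditions. -/
def IsPinv (M : Matrix m n ℝ) (X : Matrix n m ℝ) : Prop :=
  M * X * M = M ∧ X * M * X = X ∧ (M * X)ᵀ = M * X ∧ (X * M)ᵀ = X * M

lemma isPinv_unique {M : Matrix m n ℝ} {X Y : Matrix n m ℝ}
    (hX : IsPinv M X) (hY : IsPinv M Y) : X = Y := by
  obtain ⟨hX1, hX2, hX3, hX4⟩ := hX
  obtain ⟨hY1, hY2, hY3, hY4⟩ := hY
  have hMXY : M * X = M * Y := by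
    calc M * X = (M * X)ᵀ := hX3.symm
    _ = Xᵀ * Mᵀ := by rw [transpose_mul]
    _ = Xᵀ * (M * Y * M)ᵀ := by rw [hY1]
    _ = Xᵀ * (Mᵀ * (M * Y)ᵀ) := by rw [transpose_mul]
    _ = (Xᵀ * Mᵀ) * (M * Y)ᵀ := by simp only [Matrix.mul_assoc]
    _ = (M * X)ᵀ * (M * Y)ᵀ := by simp only [transpose_mul]
    _ = (M * X) * (M * Y) := by rw [hX3, hY3]
    _ = (M * X * M) * Y := by simp only [Matrix.mul_assoc]
    _ = M * Y := by rw [hX1]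
  have hXYM : X * M = Y * M := by
    calc X * M = (X * M)ᵀ := hX4.symm
    _ = Mᵀ * Xᵀ := by simp only [transpose_mul]
    _ = (M * Y * M)ᵀ * Xᵀ := by rw [hY1]
    _ = (Mᵀ * Yᵀ) * (Mᵀ * Xᵀ) := by simp only [transpose_mul, Matrix.mul_assoc]
    _ = (Y * M)ᵀ * (X * M)ᵀ := by simp only [transpose_mul, Matrix.mul_assoc]
    _ = (Y * M) * (X * M) := by rw [hX4, hY4]
    _ = Y * (M * X * M) := by simp only [Matrix.mul_assoc]
    _ = Y * M := by rw [hX1]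
  calc X = X * M * X := hX2.symm
  _ = Y * M * X := by rw [hXYM]
  _ = Y * (M * X) := by simp only [Matrix.mul_assoc]
  _ = Y * (M * Y) := by rw [hMXY]
  _ = Y * M * Y := by simp only [Matrix.mul_assoc]
  _ = Y := hY2

open scoped Classical in
lemma pinv_eq {M : Matrix m n ℝ} {X : Matrix n m ℝ} (hX : IsPinv M X) : pinv M = X := by
  have h : ∃ X : Matrix n m ℝ,
      M * X * M = M ∧ X * M * X = X ∧ (M * X)ᵀ = M * X ∧ (X * M)ᵀ = X * M := ⟨X, hX⟩
  rw [pinv, dif_pos h]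
  exact isPinv_unique h.choose_spec hX

open scoped Classical in
lemma pinv_eq_zero {M : Matrix m n ℝ}
    (h : ¬ ∃ X : Matrix n m ℝ,
      M * X * M = M ∧ X * M * X = X ∧ (M * X)ᵀ = M * X ∧ (X * M)ᵀ = X * M) :
    pinv M = 0 := by rw [pinv, dif_neg h]

/-- Over ℝ, `DᵀD = 0` implies `D = 0`. -/
lemma eq_zero_of_transpose_mul_self {D : Matrix m n ℝ} (h : Dᵀ * D = 0) : D = 0 := by
  rw [← conjTranspose_eq_transpose_of_trivial] at h
  exact conjTranspose_mul_self_eq_zero.mp h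

end PinvAux

lemma psd_sqrt_transpose {n : ℕ} {A : Matrix (Fin n) (Fin n) ℝ} (hA : A.PosSemidef) :
    hA.sqrtᵀ = hA.sqrt := by
  rw [← conjTranspose_eq_transpose_of_trivial, Matrix.PosSemidef.sqrt]
  simp only [conjTranspose_mul, diagonal_conjTranspose, Matrix.mul_assoc]
  congr 2

lemma psd_sqrt_mul_self {n : ℕ} {A : Matrix (Fin n) (Fin n) ℝ} (hA : A.PosSemidef) :
    hA.sqrt * hA.sqrt = A := by
  conv_rhs => rw [hA.1.spectral_theorem, Unitary.conjStarAlgAut_apply]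
  rw [Matrix.PosSemidef.sqrt]
  set U : Matrix (Fin n) (Fin n) ℝ := (hA.1.eigenvectorUnitary : Matrix (Fin n) (Fin n) ℝ)
  have hU : (star hA.1.eigenvectorUnitary : Matrix (Fin n) (Fin n) ℝ) * U = 1 :=
    Unitary.coe_star_mul_self _
  calc U * diagonal (fun i => ((√(hA.1.eigenvalues i) : ℝ) : ℝ)) *
        (star hA.1.eigenvectorUnitary : Matrix (Fin n) (Fin n) ℝ) *
        (U * diagonal (fun i => ((√(hA.1.eigenvalues i) : ℝ) : ℝ)) *
        (star hA.1.eigenvectorUnitary : Matrix (Fin n) (Fin n) ℝ))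
      = U * (diagonal (fun i => ((√(hA.1.eigenvalues i) : ℝ) : ℝ)) *
        ((star hA.1.eigenvectorUnitary : Matrix (Fin n) (Fin n) ℝ) * U) *
        diagonal (fun i => ((√(hA.1.eigenvalues i) : ℝ) : ℝ))) *
        (star hA.1.eigenvectorUnitary : Matrix (Fin n) (Fin n) ℝ) := by
        simp only [Matrix.mul_assoc]
    _ = _ := by
        rw [hU, Matrix.mul_one, diagonal_mul_diagonal]
        congr 3
        funext i
        simp [Real.mul_self_sqrt (hA.eigenvalues_nonneg i)]

/-- For a PSD matrix `A` and any sampling matrix `S`, with `C = A S` and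
`W = Sᵗ A S`, the Nyström extension satisfies `C W† Cᵗ = A^{1/2} P_{A^{1/2} S} A^{1/2}`,
where `P_{A^{1/2} S} = (A^{1/2} S)(A^{1/2} S)†` is the orthogonal projection onto the column
space of `A^{1/2} S`. -/
theorem nystrom_eq_sqrt_proj_sqrt {n ℓ : ℕ}
    (A : Matrix (Fin n) (Fin n) ℝ) (hA : A.PosSemidef)
    (S : Matrix (Fin n) (Fin ℓ) ℝ)
    (C : Matrix (Fin n) (Fin ℓ) ℝ) (W : Matrix (Fin ℓ) (Fin ℓ) ℝ)
    (hC : C = A * S) (hW : W = Sᵀ * A * S) :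
    C * pinv W * Cᵀ =
      hA.sqrt * ((hA.sqrt * S) * pinv (hA.sqrt * S)) * hA.sqrt := by
  set R := hA.sqrt with hR
  have hRsymm : Rᵀ = R := by
    exact psd_sqrt_transpose hA
  have hRR : R * R = A := psd_sqrt_mul_self hA
  set B := R * S with hB
  have hCB : C = R * B := by rw [hC, hB, ← Matrix.mul_assoc, hRR]
  have hCt : Cᵀ = Bᵀ * R := by rw [hCB, transpose_mul, hRsymm]
  have hWB : W = Bᵀ * B := by
    rw [hW, hB, transpose_mul, hRsymm]
    calc Sᵀ * A * S = Sᵀ * (R * R) * S := by rw [hRR]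
    _ = Sᵀ * R * (R * S) := by simp only [Matrix.mul_assoc]
  by_cases hex : ∃ X : Matrix (Fin ℓ) (Fin ℓ) ℝ,
      W * X * W = W ∧ X * W * X = X ∧ (W * X)ᵀ = W * X ∧ (X * W)ᵀ = X * W
  · obtain ⟨X, hX⟩ := hex
    have hXp : IsPinv W X := hX
    obtain ⟨h1, h2, h3, h4⟩ := hXp
    have hWsymm : Wᵀ = W := by rw [hWB, transpose_mul, transpose_transpose]
    have hXt : IsPinv W Xᵀ := by
      refine ⟨?_, ?_, ?_, ?_⟩
      · calc W * Xᵀ * W = (Wᵀ * X * Wᵀ)ᵀ := by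
              simp only [transpose_mul, transpose_transpose]; simp only [Matrix.mul_assoc]
        _ = W := by rw [hWsymm, h1, hWsymm]
      · calc Xᵀ * W * Xᵀ = (X * Wᵀ * X)ᵀ := by
              simp only [transpose_mul, transpose_transpose]; simp only [Matrix.mul_assoc]
        _ = Xᵀ := by rw [hWsymm, h2]
      · calc (W * Xᵀ)ᵀ = X * Wᵀ := by rw [transpose_mul, transpose_transpose]
        _ = X * W := by rw [hWsymm]
        _ = (X * W)ᵀ := h4.symm
        _ = Wᵀ * Xᵀ := by rw [transpose_mul]
        _ = W * Xᵀ := by rw [hWsymm]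
      · calc (Xᵀ * W)ᵀ = Wᵀ * X := by rw [transpose_mul, transpose_transpose]
        _ = W * X := by rw [hWsymm]
        _ = (W * X)ᵀ := h3.symm
        _ = Xᵀ * Wᵀ := by rw [transpose_mul]
        _ = Xᵀ * W := by rw [hWsymm]
    have hXsymm : Xᵀ = X := isPinv_unique hXt ⟨h1, h2, h3, h4⟩
    have hW1 : (Bᵀ * B) * X * (Bᵀ * B) = Bᵀ * B := by rw [← hWB]; exact h1
    -- key: B * X * (Bᵀ * B) = B
    have hkey : B * X * (Bᵀ * B) = B := by
      have hDD : (B * X * (Bᵀ * B) - B)ᵀ * (B * X * (Bᵀ * B) - B) = 0 := by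
        have hDt : (B * X * (Bᵀ * B) - B)ᵀ = (Bᵀ * B) * X * Bᵀ - Bᵀ := by
          simp only [transpose_sub, transpose_mul, transpose_transpose, hXsymm]
          simp only [Matrix.mul_assoc]
        rw [hDt]
        have e1 : ((Bᵀ * B) * X * Bᵀ) * (B * X * (Bᵀ * B)) = Bᵀ * B := by
          calc ((Bᵀ * B) * X * Bᵀ) * (B * X * (Bᵀ * B))
              = ((Bᵀ * B) * X * (Bᵀ * B)) * X * (Bᵀ * B) := by simp only [Matrix.mul_assoc]
          _ = (Bᵀ * B) * X * (Bᵀ * B) := by simp only [hW1]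
          _ = Bᵀ * B := hW1
        have e2 : ((Bᵀ * B) * X * Bᵀ) * B = Bᵀ * B := by
          calc ((Bᵀ * B) * X * Bᵀ) * B = (Bᵀ * B) * X * (Bᵀ * B) := by simp only [Matrix.mul_assoc]
          _ = Bᵀ * B := hW1
        have e3 : Bᵀ * (B * X * (Bᵀ * B)) = Bᵀ * B := by
          calc Bᵀ * (B * X * (Bᵀ * B)) = (Bᵀ * B) * X * (Bᵀ * B) := by simp only [Matrix.mul_assoc]
          _ = Bᵀ * B := hW1
        rw [Matrix.sub_mul, Matrix.mul_sub, Matrix.mul_sub, e1, e2, e3]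
        abel
      exact sub_eq_zero.mp (eq_zero_of_transpose_mul_self hDD)
    have hZ : IsPinv B (X * Bᵀ) := by
      refine ⟨?_, ?_, ?_, ?_⟩
      · calc B * (X * Bᵀ) * B = B * X * (Bᵀ * B) := by simp only [Matrix.mul_assoc]
        _ = B := hkey
      · calc (X * Bᵀ) * B * (X * Bᵀ) = (X * (Bᵀ * B) * X) * Bᵀ := by simp only [Matrix.mul_assoc]
        _ = X * Bᵀ := by rw [← hWB, h2]
      · simp only [transpose_mul, transpose_transpose, hXsymm, Matrix.mul_assoc]
      · have heq : (X * Bᵀ) * B = X * W := by rw [hWB]; simp only [Matrix.mul_assoc]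
        rw [heq, h4]
    have hpinvW : pinv W = X := pinv_eq ⟨h1, h2, h3, h4⟩
    have hpinvB : pinv B = X * Bᵀ := pinv_eq hZ
    rw [hCt, hCB, hpinvW, hpinvB]
    simp only [Matrix.mul_assoc]
  · have hnoB : ¬ ∃ Z : Matrix (Fin ℓ) (Fin n) ℝ,
        B * Z * B = B ∧ Z * B * Z = Z ∧ (B * Z)ᵀ = B * Z ∧ (Z * B)ᵀ = Z * B := by
      rintro ⟨Z, hz1, hz2, hz3, hz4⟩
      have hBZ : Zᵀ * Bᵀ = B * Z := by rw [← transpose_mul, hz3]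
      have hZB : Bᵀ * Zᵀ = Z * B := by rw [← transpose_mul, hz4]
      have hidem : (B * Z) * (B * Z) = B * Z := by
        calc (B * Z) * (B * Z) = (B * Z * B) * Z := by simp only [Matrix.mul_assoc]
        _ = B * Z := by simp only [hz1]
      have hWX : (Bᵀ * B) * (Z * Zᵀ) = Z * B := by
        calc (Bᵀ * B) * (Z * Zᵀ) = Bᵀ * ((B * Z) * Zᵀ) := by simp only [Matrix.mul_assoc]
        _ = Bᵀ * ((Zᵀ * Bᵀ) * Zᵀ) := by rw [hBZ]
        _ = (Bᵀ * Zᵀ) * (Bᵀ * Zᵀ) := by simp only [Matrix.mul_assoc]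
        _ = (Z * B) * (Z * B) := by rw [hZB]
        _ = (Z * B * Z) * B := by simp only [Matrix.mul_assoc]
        _ = Z * B := by simp only [hz2]
      have hXW : (Z * Zᵀ) * (Bᵀ * B) = Z * B := by
        calc (Z * Zᵀ) * (Bᵀ * B) = Z * ((Zᵀ * Bᵀ) * B) := by simp only [Matrix.mul_assoc]
        _ = Z * ((B * Z) * B) := by rw [hBZ]
        _ = Z * (B * Z * B) := by simp only [Matrix.mul_assoc]
        _ = Z * B := by simp only [hz1]
      apply hex
      refine ⟨Z * Zᵀ, ?_, ?_, ?_, ?_⟩ <;> rw [hWB]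
      · calc (Bᵀ * B) * (Z * Zᵀ) * (Bᵀ * B)
            = Bᵀ * ((B * Z) * (Zᵀ * Bᵀ)) * B := by simp only [Matrix.mul_assoc]
        _ = Bᵀ * ((B * Z) * (B * Z)) * B := by rw [hBZ]
        _ = Bᵀ * (B * Z) * B := by rw [hidem]
        _ = Bᵀ * (B * Z * B) := by simp only [Matrix.mul_assoc]
        _ = Bᵀ * B := by simp only [hz1]
      · calc (Z * Zᵀ) * (Bᵀ * B) * (Z * Zᵀ) = (Z * B) * (Z * Zᵀ) := by rw [hXW]
        _ = (Z * B * Z) * Zᵀ := by simp only [Matrix.mul_assoc]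
        _ = Z * Zᵀ := by simp only [hz2]
      · rw [hWX]; exact hz4
      · rw [hXW]; exact hz4
    rw [pinv_eq_zero hex, pinv_eq_zero hnoB]
    simp
end

section
/- Let M be an n×n real PSD matrix and fix integers 1 ≤ k ≤ ℓ ≤ n. Let U₁ and U₂ have orthonormal columns spanning respectively a dominant k-dimensional invariant subspace of M and the corresponding bottom (n−k)-dimensional invariant subspace, and let Σ₂ be the diagonal matrix of the n−k smallest eigenvalues of M. Given an n×ℓ matrix S, set Ω₁ = U₁ᵗ S and Ω₂ = U₂ᵗ S. If Ω₁ has full row rank, then ‖(I − P_{M S}) M‖₂² ≤ ‖Σ₂‖₂² + ‖Σ₂ Ω₂ Ω₁†‖₂². -/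
open Matrix
open scoped Matrix.Norms.L2Operator

open scoped Classical in
lemma exists_pinv {m n : Type*} [Fintype m] [Fintype n] [DecidableEq m] [DecidableEq n]
    (A : Matrix m n ℝ) :
    ∃ X : Matrix n m ℝ, A * X * A = A ∧ X * A * X = X ∧ (A * X)ᵀ = A * X ∧ (X * A)ᵀ = X * A := by
  have hB : (Aᵀ * A).IsHermitian := by
    rw [← conjTranspose_eq_transpose_of_trivial]
    exact isHermitian_conjTranspose_mul_self A
  set V : Matrix n n ℝ := (hB.eigenvectorUnitary : Matrix n n ℝ) with hV
  set d : n → ℝ := hB.eigenvalues with hd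
  have hVV : Vᵀ * V = 1 := by
    have := (Matrix.mem_unitaryGroup_iff').mp hB.eigenvectorUnitary.2
    rwa [star_eq_conjTranspose, conjTranspose_eq_transpose_of_trivial] at this
  have hVV' : V * Vᵀ = 1 := by
    have := (Matrix.mem_unitaryGroup_iff).mp hB.eigenvectorUnitary.2
    rwa [star_eq_conjTranspose, conjTranspose_eq_transpose_of_trivial] at this
  have hspec : Aᵀ * A = V * diagonal d * Vᵀ := by
    have := hB.spectral_theorem
    rwa [Unitary.conjStarAlgAut_apply, star_eq_conjTranspose, conjTranspose_eq_transpose_of_trivial,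
      show (RCLike.ofReal ∘ hB.eigenvalues : n → ℝ) = d from rfl] at this
  have key : ∀ f g : n → ℝ, (V * diagonal f * Vᵀ) * (V * diagonal g * Vᵀ)
      = V * diagonal (fun i => f i * g i) * Vᵀ := by
    intro f g
    have hcancel : ∀ X : Matrix n n ℝ, Vᵀ * (V * X) = X := fun X => by
      rw [← mul_assoc, hVV, one_mul]
    calc (V * diagonal f * Vᵀ) * (V * diagonal g * Vᵀ)
        = V * (diagonal f * (Vᵀ * (V * (diagonal g * Vᵀ)))) := by
          simp only [Matrix.mul_assoc]
      _ = V * (diagonal f * (diagonal g * Vᵀ)) := by rw [hcancel]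
      _ = V * diagonal (fun i => f i * g i) * Vᵀ := by
          simp only [← Matrix.mul_assoc, diagonal_mul_diagonal]
  have hsym : ∀ f : n → ℝ, (V * diagonal f * Vᵀ)ᵀ = V * diagonal f * Vᵀ := by
    intro f
    rw [transpose_mul, transpose_mul, transpose_transpose, diagonal_transpose, mul_assoc]
  set e : n → ℝ := fun i => if d i = 0 then 0 else (d i)⁻¹ with he
  set q : n → ℝ := fun i => if d i = 0 then 0 else 1 with hq
  set X : Matrix n m ℝ := V * diagonal e * Vᵀ * Aᵀ with hX
  set Q : Matrix n n ℝ := V * diagonal q * Vᵀ with hQ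
  have hXA : X * A = Q := by
    rw [hX, Matrix.mul_assoc (V * diagonal e * Vᵀ) Aᵀ A, hspec, key]
    rw [hQ, show (fun i => e i * d i) = q from funext fun i => by
      by_cases h : d i = 0 <;> simp [he, hq, h, inv_mul_cancel₀]]
  have hQsymm : Qᵀ = Q := hsym q
  have hAQ : A * Q = A := by
    have h1Q : 1 - Q = V * diagonal (fun i => 1 - q i) * Vᵀ := by
      have hdq : diagonal (fun i => 1 - q i) = 1 - diagonal q := by
        rw [← diagonal_one, ← diagonal_sub]
      rw [hdq, mul_sub, mul_one, sub_mul, hVV', hQ]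
    set N : Matrix m n ℝ := A * (1 - Q) with hN
    have hNN : Nᵀ * N = (1 - Q) * (Aᵀ * A) * (1 - Q) := by
      rw [hN, transpose_mul, transpose_sub, transpose_one, hQsymm]
      simp only [Matrix.mul_assoc]
    rw [hspec, h1Q, key, key] at hNN
    have hzero : (fun i => (1 - q i) * d i * (1 - q i)) = fun _ => (0 : ℝ) := by
      funext i; by_cases h : d i = 0 <;> simp [hq, h]
    rw [hzero, show (diagonal (fun _ => (0:ℝ)) : Matrix n n ℝ) = 0 from diagonal_zero,
      mul_zero, zero_mul] at hNN
    have hN0 : N = 0 := by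
      have := conjTranspose_mul_self_eq_zero (A := N)
      rw [conjTranspose_eq_transpose_of_trivial] at this
      exact this.mp hNN
    have h2 : A * (1 - Q) = 0 := hN0
    rw [Matrix.mul_sub, Matrix.mul_one] at h2
    have := sub_eq_zero.mp h2
    exact this.symm
  refine ⟨X, ?_, ?_, ?_, ?_⟩
  · rw [Matrix.mul_assoc, hXA, hAQ]
  · rw [hXA, hQ, hX, ← Matrix.mul_assoc (V * diagonal q * Vᵀ) (V * diagonal e * Vᵀ) Aᵀ, key,
      show (fun i => q i * e i) = e from funext fun i => by
        by_cases h : d i = 0 <;> simp [he, hq, h]]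
  · rw [hX, ← Matrix.mul_assoc, transpose_mul, transpose_mul, transpose_transpose, hsym,
      Matrix.mul_assoc]
    simp only [Matrix.mul_assoc]
  · rw [hXA, hQsymm]

lemma pinv_spec {m n : Type*} [Fintype m] [Fintype n] (A : Matrix m n ℝ) :
    A * pinv A * A = A ∧ pinv A * A * pinv A = pinv A ∧
      (A * pinv A)ᵀ = A * pinv A ∧ (pinv A * A)ᵀ = pinv A * A := by
  classical
  have h := exists_pinv A
  rw [pinv, dif_pos h]
  exact h.choose_spec

/-- Euclidean norm of a plain vector. -/
noncomputable def en {m : Type*} [Fintype m] (v : m → ℝ) : ℝ :=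
  Real.sqrt (∑ i, v i ^ 2)

lemma en_nonneg {m : Type*} [Fintype m] (v : m → ℝ) : 0 ≤ en v := Real.sqrt_nonneg _

lemma en_sq {m : Type*} [Fintype m] (v : m → ℝ) : en v ^ 2 = ∑ i, v i ^ 2 := by
  rw [en, Real.sq_sqrt]
  positivity

lemma euc_norm_eq {m : Type*} [Fintype m] (v : EuclideanSpace ℝ m) :
    ‖v‖ = en (fun i => v i) := by
  rw [EuclideanSpace.norm_eq, en]
  congr 1
  refine Finset.sum_congr rfl fun i _ => ?_
  rw [Real.norm_eq_abs, sq_abs]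

lemma en_mulVec_le {m n : Type*} [Fintype m] [Fintype n] [DecidableEq n]
    (A : Matrix m n ℝ) (x : n → ℝ) : en (A *ᵥ x) ≤ ‖A‖ * en x := by
  have h := Matrix.l2_opNorm_mulVec A ((EuclideanSpace.equiv n ℝ).symm x)
  rw [euc_norm_eq, euc_norm_eq] at h
  exact h

lemma opNorm_le_of_en {m n : Type*} [Fintype m] [Fintype n] [DecidableEq n]
    (A : Matrix m n ℝ) {C : ℝ} (hC : 0 ≤ C) (h : ∀ x : n → ℝ, en (A *ᵥ x) ≤ C * en x) :
    ‖A‖ ≤ C := by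
  rw [Matrix.l2_opNorm_def]
  refine ContinuousLinearMap.opNorm_le_bound _ hC fun x => ?_
  rw [euc_norm_eq, euc_norm_eq]
  exact h fun i => x i

lemma en_sub_le {m : Type*} [Fintype m] (a b : m → ℝ) : en (a - b) ≤ en a + en b := by
  have h := norm_sub_le ((EuclideanSpace.equiv m ℝ).symm a) ((EuclideanSpace.equiv m ℝ).symm b)
  rw [← map_sub, euc_norm_eq, euc_norm_eq, euc_norm_eq] at h
  exact h

lemma en_proj_contract {m : Type*} [Fintype m] [DecidableEq m] {P : Matrix m m ℝ}
    (hsym : Pᵀ = P) (hidem : P * P = P) (v : m → ℝ) :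
    en ((1 - P) *ᵥ v) ≤ en v := by
  set w : m → ℝ := (1 - P) *ᵥ v with hw
  set u : m → ℝ := P *ᵥ v with hu
  have hvwu : ∀ i, v i = w i + u i := by
    intro i
    rw [hw, hu, Matrix.sub_mulVec, Matrix.one_mulVec]
    simp [Pi.sub_apply]
  have h2 : (1 - P)ᵀ * P = 0 := by
    rw [Matrix.transpose_sub, Matrix.transpose_one, hsym, Matrix.sub_mul, Matrix.one_mul,
      hidem, sub_self]
  have hcross : ∑ i, w i * u i = 0 := by
    show w ⬝ᵥ u = 0
    rw [hw, hu, Matrix.dotProduct_mulVec, ← Matrix.vecMul_transpose, Matrix.vecMul_vecMul,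
      h2, Matrix.vecMul_zero, zero_dotProduct]
  have hsum : ∑ i, v i ^ 2 = ∑ i, w i ^ 2 + ∑ i, u i ^ 2 := by
    calc ∑ i, v i ^ 2 = ∑ i, (w i ^ 2 + 2 * (w i * u i) + u i ^ 2) :=
          Finset.sum_congr rfl fun i _ => by rw [hvwu i]; ring
      _ = ∑ i, w i ^ 2 + 2 * ∑ i, (w i * u i) + ∑ i, u i ^ 2 := by
          rw [Finset.sum_add_distrib, Finset.sum_add_distrib, ← Finset.mul_sum]
      _ = ∑ i, w i ^ 2 + ∑ i, u i ^ 2 := by rw [hcross]; ring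
  rw [en, en]
  apply Real.sqrt_le_sqrt
  rw [hsum]
  have : 0 ≤ ∑ i, u i ^ 2 := by positivity
  linarith
lemma pinv_right_inv {k ℓ : ℕ} (A : Matrix (Fin k) (Fin ℓ) ℝ) (h : A.rank = k) :
    A * pinv A = 1 := by
  have hsur : Function.Surjective A.mulVecLin := by
    rw [← LinearMap.range_eq_top]
    apply Submodule.eq_top_of_finrank_eq
    rw [← Matrix.rank, h]
    simp [Module.finrank_fintype_fun_eq_card]
  have hvec : ∀ v : Fin k → ℝ, (A * pinv A) *ᵥ v = v := by
    intro v
    obtain ⟨u, hu⟩ := hsur v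
    have hu' : A *ᵥ u = v := hu
    calc (A * pinv A) *ᵥ v = (A * pinv A) *ᵥ (A *ᵥ u) := by rw [hu']
      _ = (A * pinv A * A) *ᵥ u := by rw [Matrix.mulVec_mulVec]
      _ = A *ᵥ u := by rw [(pinv_spec A).1]
      _ = v := hu'
  ext i j
  have := congrFun (hvec (Pi.single j 1)) i
  rw [Matrix.mulVec_single] at this
  simp only [MulOpposite.op_one, one_smul, Matrix.col_apply] at this
  rw [this]
  simp [Matrix.one_apply, Pi.single_apply]

lemma en_mulVec_orth {m : Type*} [Fintype m] [DecidableEq m] {U : Matrix m m ℝ}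
    (hU : Uᵀ * U = 1) (v : m → ℝ) : en (U *ᵥ v) = en v := by
  rw [en, en]
  congr 1
  have h1 : ∑ i, (U *ᵥ v) i ^ 2 = (U *ᵥ v) ⬝ᵥ (U *ᵥ v) := by
    simp [dotProduct, sq]
  have h2 : ∑ i, v i ^ 2 = v ⬝ᵥ v := by simp [dotProduct, sq]
  rw [h1, h2, Matrix.dotProduct_mulVec, ← Matrix.vecMul_transpose, Matrix.vecMul_vecMul,
    hU, Matrix.vecMul_one]


lemma sum_split {n k : ℕ} (hk : k ≤ n) (h : k + (n - k) = n) (f : Fin n → ℝ) :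
    ∑ j, f j = (∑ i : Fin k, f (Fin.castLE hk i)) +
      ∑ j : Fin (n - k), f (Fin.cast h (Fin.natAdd k j)) := by
  classical
  calc ∑ j, f j = ∑ s : Fin k ⊕ Fin (n - k), f ((finSumFinEquiv.trans (finCongr h)) s) :=
        (Equiv.sum_comp _ f).symm
    _ = (∑ i : Fin k, f ((finSumFinEquiv.trans (finCongr h)) (Sum.inl i))) +
        ∑ j : Fin (n - k), f ((finSumFinEquiv.trans (finCongr h)) (Sum.inr j)) :=
        Fintype.sum_sum_type _
    _ = (∑ i : Fin k, f (Fin.castLE hk i)) +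
        ∑ j : Fin (n - k), f (Fin.cast h (Fin.natAdd k j)) := by
        rfl

/-- (Halko–Martinsson–Tropp, Theorem 9.1, specialized to PSD `M`.)
`M = U (diagonal D) Uᵗ` is an eigendecomposition with nonincreasing eigenvalues `D`;
`U₁`/`U₂` are the first `k`/last `n − k` eigenvector columns and `Sigma₂` the diagonal block of
the `n − k` smallest eigenvalues; `Ω₁ = U₁ᵗ S`, `Ω₂ = U₂ᵗ S`.  If `Ω₁` has full row rank, then
`‖(I − P_{M S}) M‖₂² ≤ ‖Sigma₂‖₂² + ‖Sigma₂ Ω₂ Ω₁†‖₂²`. -/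
theorem random_projection_error_bound {n ℓ k : ℕ} (hk1 : 1 ≤ k) (hkl : k ≤ ℓ) (hln : ℓ ≤ n)
    (M : Matrix (Fin n) (Fin n) ℝ) (hM : M.PosSemidef)
    (S : Matrix (Fin n) (Fin ℓ) ℝ)
    (U : Matrix (Fin n) (Fin n) ℝ) (D : Fin n → ℝ)
    (hU : Uᵀ * U = 1) (hD : Antitone D)
    (hMeig : M = U * Matrix.diagonal D * Uᵀ)
    (Ω₁ : Matrix (Fin k) (Fin ℓ) ℝ) (Ω₂ : Matrix (Fin (n - k)) (Fin ℓ) ℝ)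
    (Sigma₂ : Matrix (Fin (n - k)) (Fin (n - k)) ℝ)
    (hΩ₁ : Ω₁ = (U.submatrix id (Fin.castLE (hkl.trans hln)))ᵀ * S)
    (hΩ₂ : Ω₂ = (U.submatrix id fun j : Fin (n - k) =>
        Fin.cast (by omega : k + (n - k) = n) (Fin.natAdd k j))ᵀ * S)
    (hSigma₂ : Sigma₂ = Matrix.diagonal fun j : Fin (n - k) =>
        D (Fin.cast (by omega : k + (n - k) = n) (Fin.natAdd k j)))
    (hrank : Ω₁.rank = k) :
    ‖((1 : Matrix (Fin n) (Fin n) ℝ) - (M * S) * pinv (M * S)) * M‖ ^ 2 ≤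
      ‖Sigma₂‖ ^ 2 + ‖Sigma₂ * Ω₂ * pinv Ω₁‖ ^ 2 := by
  have hnk : k + (n - k) = n := by omega
  have hkn : k ≤ n := hkl.trans hln
  set cL : Fin k → Fin n := Fin.castLE hkn with hcL
  set g : Fin (n - k) → Fin n := fun j => Fin.cast hnk (Fin.natAdd k j) with hg
  have hUU' : U * Uᵀ = 1 := mul_eq_one_comm.mp hU
  set Ω : Matrix (Fin n) (Fin ℓ) ℝ := Uᵀ * S with hΩ
  have hΩ₁row : ∀ i j, Ω₁ i j = Ω (cL i) j := by
    intro i j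
    rw [hΩ₁, hΩ]
    simp [Matrix.mul_apply]
  have hΩ₂row : ∀ i j, Ω₂ i j = Ω (g i) j := by
    intro i j
    rw [hΩ₂, hΩ]
    simp [Matrix.mul_apply]
  have hrinv : Ω₁ * pinv Ω₁ = 1 := pinv_right_inv _ hrank
  set Y : Matrix (Fin n) (Fin ℓ) ℝ := M * S with hY
  set P : Matrix (Fin n) (Fin n) ℝ := Y * pinv Y with hP
  obtain ⟨p1, p2, p3, p4⟩ := pinv_spec Y
  have hPsym : Pᵀ = P := p3
  have hPP : P * P = P := by
    rw [hP, ← Matrix.mul_assoc, p1]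
  have h1PY : (1 - P) * Y = 0 := by
    rw [Matrix.sub_mul, Matrix.one_mul, hP, p1, sub_self]
  set G : Matrix (Fin (n - k)) (Fin k) ℝ := Sigma₂ * Ω₂ * pinv Ω₁ with hG
  set R : ℝ := ‖Sigma₂‖ ^ 2 + ‖G‖ ^ 2 with hR
  have hR0 : (0 : ℝ) ≤ R := by positivity
  suffices hnorm : ‖(1 - P) * M‖ ≤ Real.sqrt R by
    calc ‖(1 - P) * M‖ ^ 2 ≤ Real.sqrt R ^ 2 := by
          apply pow_le_pow_left₀ (norm_nonneg _) hnorm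
      _ = R := Real.sq_sqrt hR0
  apply opNorm_le_of_en _ (Real.sqrt_nonneg _)
  intro x
  set y : Fin n → ℝ := Uᵀ *ᵥ x with hy
  set y₁ : Fin k → ℝ := fun i => y (cL i) with hy₁
  set y₂ : Fin (n - k) → ℝ := fun j => y (g j) with hy₂
  set c : Fin ℓ → ℝ := pinv Ω₁ *ᵥ y₁ with hc
  set z : Fin n → ℝ := y - Ω *ᵥ c with hz
  set r : Fin (n - k) → ℝ := Sigma₂ *ᵥ y₂ - G *ᵥ y₁ with hr
  -- the sampled coordinates of z vanish
  have hΩc₁ : ∀ i : Fin k, (Ω *ᵥ c) (cL i) = (Ω₁ *ᵥ c) i := by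
    intro i
    simp only [Matrix.mulVec, dotProduct]
    exact Finset.sum_congr rfl fun j _ => by rw [hΩ₁row i j]
  have hΩc₂ : ∀ i : Fin (n - k), (Ω *ᵥ c) (g i) = (Ω₂ *ᵥ c) i := by
    intro i
    simp only [Matrix.mulVec, dotProduct]
    exact Finset.sum_congr rfl fun j _ => by rw [hΩ₂row i j]
  have hztop : ∀ i : Fin k, z (cL i) = 0 := by
    intro i
    have h1 : (Ω₁ *ᵥ c) i = y₁ i := by
      rw [hc, Matrix.mulVec_mulVec, hrinv, Matrix.one_mulVec]
    have : z (cL i) = y (cL i) - (Ω *ᵥ c) (cL i) := rfl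
    rw [this, hΩc₁ i, h1]
    simp [hy₁]
  -- the matrix applied to x, rewritten
  have hstep1 : ((1 - P) * M) *ᵥ x = (1 - P) *ᵥ (M *ᵥ x - Y *ᵥ c) := by
    have h0 : (1 - P) *ᵥ (Y *ᵥ c) = 0 := by
      rw [Matrix.mulVec_mulVec, h1PY, Matrix.zero_mulVec]
    rw [Matrix.mulVec_sub, h0, sub_zero, Matrix.mulVec_mulVec]
  have hstep2 : M *ᵥ x - Y *ᵥ c = U *ᵥ (Matrix.diagonal D *ᵥ z) := by
    have hMx : M *ᵥ x = U *ᵥ (Matrix.diagonal D *ᵥ y) := by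
      rw [hMeig, hy, ← Matrix.mulVec_mulVec, ← Matrix.mulVec_mulVec]
    have hYc : Y *ᵥ c = U *ᵥ (Matrix.diagonal D *ᵥ (Ω *ᵥ c)) := by
      rw [hY, hMeig, hΩ]
      rw [show U * Matrix.diagonal D * Uᵀ * S = U * (Matrix.diagonal D * (Uᵀ * S)) by
        simp only [Matrix.mul_assoc]]
      rw [← Matrix.mulVec_mulVec, ← Matrix.mulVec_mulVec]
    rw [hMx, hYc, ← Matrix.mulVec_sub, ← Matrix.mulVec_sub, hz]
  -- identification of the lower block
  have hlower : ∀ j : Fin (n - k), (Matrix.diagonal D *ᵥ z) (g j) = r j := by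
    intro j
    have h1 : (Matrix.diagonal D *ᵥ z) (g j) = D (g j) * z (g j) := by
      rw [Matrix.mulVec_diagonal]
    have h2 : (Sigma₂ *ᵥ y₂) j = D (g j) * y (g j) := by
      rw [hSigma₂, Matrix.mulVec_diagonal, hy₂]
    have h3 : (G *ᵥ y₁) j = D (g j) * (Ω *ᵥ c) (g j) := by
      rw [hG, ← Matrix.mulVec_mulVec, ← Matrix.mulVec_mulVec, ← hc]
      rw [hSigma₂, Matrix.mulVec_diagonal, ← hΩc₂ j]
    rw [h1, hr]
    have : z (g j) = y (g j) - (Ω *ᵥ c) (g j) := rfl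
    rw [this]
    simp only [Pi.sub_apply, h2, h3]
    ring
  rw [hstep1]
  calc en ((1 - P) *ᵥ (M *ᵥ x - Y *ᵥ c)) ≤ en (M *ᵥ x - Y *ᵥ c) :=
        en_proj_contract hPsym hPP _
    _ = en (Matrix.diagonal D *ᵥ z) := by rw [hstep2, en_mulVec_orth hU]
    _ = en r := by
        rw [en, en]
        congr 1
        rw [sum_split hkn hnk (fun j => ((Matrix.diagonal D *ᵥ z) j) ^ 2)]
        have hz0 : ∀ i : Fin k, ((Matrix.diagonal D *ᵥ z) (Fin.castLE hkn i)) ^ 2 = 0 := by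
          intro i
          rw [Matrix.mulVec_diagonal, show z (Fin.castLE hkn i) = 0 from hztop i]
          ring
        rw [Finset.sum_congr rfl fun i _ => hz0 i, Finset.sum_const_zero, zero_add]
        exact Finset.sum_congr rfl fun j _ => by
          rw [show (Matrix.diagonal D *ᵥ z) (Fin.cast hnk (Fin.natAdd k j)) = r j from hlower j]
    _ ≤ Real.sqrt R * en x := by
        have hrle : en r ≤ ‖Sigma₂‖ * en y₂ + ‖G‖ * en y₁ := by
          refine (en_sub_le _ _).trans ?_
          exact add_le_add (en_mulVec_le _ _) (en_mulVec_le _ _)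
        have hy12 : en y₁ ^ 2 + en y₂ ^ 2 = en x ^ 2 := by
          have hyx : en y = en x := by
            rw [hy]
            have hU2 : (Uᵀ)ᵀ * Uᵀ = 1 := by rw [Matrix.transpose_transpose]; exact hUU'
            exact en_mulVec_orth hU2 x
          rw [← hyx, en_sq, en_sq, en_sq, sum_split hkn hnk (fun j => y j ^ 2)]
        have hsq : en r ^ 2 ≤ R * en x ^ 2 := by
          calc en r ^ 2 ≤ (‖Sigma₂‖ * en y₂ + ‖G‖ * en y₁) ^ 2 := by
                apply pow_le_pow_left₀ (en_nonneg _) hrle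
            _ ≤ (‖Sigma₂‖ ^ 2 + ‖G‖ ^ 2) * (en y₂ ^ 2 + en y₁ ^ 2) := by
                nlinarith [sq_nonneg (‖Sigma₂‖ * en y₁ - ‖G‖ * en y₂), norm_nonneg Sigma₂,
                  norm_nonneg G, en_nonneg y₁, en_nonneg y₂]
            _ = R * en x ^ 2 := by rw [hR, ← hy12]; ring
        calc en r = Real.sqrt (en r ^ 2) := (Real.sqrt_sq (en_nonneg _)).symm
          _ ≤ Real.sqrt (R * en x ^ 2) := Real.sqrt_le_sqrt hsq
          _ = Real.sqrt R * en x := by rw [Real.sqrt_mul hR0, Real.sqrt_sq (en_nonneg _)]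
end

section
/- Let A and Ã be n×n real PSD matrices with λ_k(A) > λ_{k+1}(A) and λ_k(Ã) > λ_{k+1}(Ã), and let P and P̃ be the orthogonal projections onto the (unique) dominant k-dimensional invariant subspaces of A and Ã respectively. Suppose ‖A − Ã‖₂ ≤ C·λ_j(A) for some constant C > 0 and some j ≥ k, and suppose λ_k(A) − λ_{k+1}(A) − C·λ_j(A) > 0. Then ‖P − P̃‖₂ ≤ C·λ_j(A) / (λ_k(A) − λ_{k+1}(A) − C·λ_j(A)). -/
open Matrix
open scoped Matrix.Norms.L2Operator

open Finset
section helpers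
variable {n : ℕ}

/-- view a plain vector as a Euclidean space element -/
noncomputable def ev {n : ℕ} (x : Fin n → ℝ) : EuclideanSpace ℝ (Fin n) :=
  (EuclideanSpace.equiv (Fin n) ℝ).symm x

lemma enorm_sq (x : Fin n → ℝ) : ‖ev x‖ ^ 2 = x ⬝ᵥ x := by
  rw [EuclideanSpace.norm_sq_eq]
  simp [ev, dotProduct, sq]

lemma enorm_nonneg' (x : Fin n → ℝ) : (0:ℝ) ≤ ‖ev x‖ := norm_nonneg _

lemma l2_mulVec_le (M : Matrix (Fin n) (Fin n) ℝ) (x : Fin n → ℝ) :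
    ‖ev (M *ᵥ x)‖ ≤ ‖M‖ * ‖ev x‖ := M.l2_opNorm_mulVec (ev x)

lemma l2_norm_mulVec (M : Matrix (Fin n) (Fin n) ℝ) (x : Fin n → ℝ) :
    (M *ᵥ x) ⬝ᵥ (M *ᵥ x) ≤ ‖M‖ ^ 2 * (x ⬝ᵥ x) := by
  have h2 : ‖ev (M *ᵥ x)‖ ^ 2 ≤ (‖M‖ * ‖ev x‖) ^ 2 :=
    pow_le_pow_left₀ (norm_nonneg _) (l2_mulVec_le M x) 2
  rw [enorm_sq, mul_pow, enorm_sq] at h2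
  exact h2

lemma l2_opNorm_le_of (M : Matrix (Fin n) (Fin n) ℝ) {c : ℝ} (hc : 0 ≤ c)
    (h : ∀ x : Fin n → ℝ, (M *ᵥ x) ⬝ᵥ (M *ᵥ x) ≤ c ^ 2 * (x ⬝ᵥ x)) : ‖M‖ ≤ c := by
  rw [Matrix.l2_opNorm_def]
  apply ContinuousLinearMap.opNorm_le_bound _ hc
  intro x
  have hx : ‖((Matrix.toEuclideanLin.trans LinearMap.toContinuousLinearMap) M) x‖
      = ‖ev (M *ᵥ ((EuclideanSpace.equiv (Fin n) ℝ) x))‖ := rfl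
  rw [hx]
  have h1 : ‖ev (M *ᵥ ((EuclideanSpace.equiv (Fin n) ℝ) x))‖ ^ 2 ≤ (c * ‖x‖) ^ 2 := by
    have hxx : ‖x‖^2 = ((EuclideanSpace.equiv (Fin n) ℝ) x) ⬝ᵥ ((EuclideanSpace.equiv (Fin n) ℝ) x) := enorm_sq _
    rw [enorm_sq, mul_pow, hxx]
    exact h _
  nlinarith [enorm_nonneg' (M *ᵥ ((EuclideanSpace.equiv (Fin n) ℝ) x)), norm_nonneg x, mul_nonneg hc (norm_nonneg x)]

lemma quad_le_norm (M : Matrix (Fin n) (Fin n) ℝ) (x : Fin n → ℝ) :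
    |x ⬝ᵥ (M *ᵥ x)| ≤ ‖M‖ * (x ⬝ᵥ x) := by
  have h1 : |x ⬝ᵥ (M *ᵥ x)| ≤ ‖ev x‖ * ‖ev (M *ᵥ x)‖ := by
    have h0 := abs_real_inner_le_norm (ev x) (ev (M *ᵥ x))
    have h2 : (inner ℝ (ev x) (ev (M *ᵥ x)) : ℝ) = x ⬝ᵥ (M *ᵥ x) := by
      simp [ev, PiLp.inner_apply, dotProduct, mul_comm]
    rwa [h2] at h0
  calc |x ⬝ᵥ (M *ᵥ x)| ≤ _ := h1
    _ ≤ ‖ev x‖ * (‖M‖ * ‖ev x‖) :=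
        mul_le_mul_of_nonneg_left (l2_mulVec_le M x) (norm_nonneg _)
    _ = ‖M‖ * ‖ev x‖^2 := by ring
    _ = ‖M‖ * (x ⬝ᵥ x) := by rw [enorm_sq]

end helpers
section helpers2
variable {n : ℕ}

lemma sum_fin_cast {p : ℕ} (hp : p ≤ n) (f : Fin n → ℝ)
    (hf : ∀ t : Fin n, p ≤ (t : ℕ) → f t = 0) :
    ∑ t, f t = ∑ t : Fin p, f (Fin.castLE hp t) := by
  classical
  set g : ℕ → ℝ := fun i => if h : i < n then f ⟨i, h⟩ else 0 with hg
  have h1 : ∑ t : Fin n, f t = ∑ i ∈ range n, g i := by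
    rw [← Fin.sum_univ_eq_sum_range g n]
    refine Finset.sum_congr rfl fun t _ => ?_
    simp only [hg]; rw [dif_pos t.isLt]
  have h2 : ∑ t : Fin p, f (Fin.castLE hp t) = ∑ i ∈ range p, g i := by
    rw [← Fin.sum_univ_eq_sum_range g p]
    refine Finset.sum_congr rfl fun t _ => ?_
    simp only [hg]; rw [dif_pos (lt_of_lt_of_le t.isLt hp)]; rfl
  rw [h1, h2, ← Finset.sum_subset (Finset.range_subset_range.mpr hp)]
  intro i hi hni
  have hin : i < n := mem_range.mp hi
  have hpi : p ≤ i := le_of_not_gt (fun h => hni (mem_range.mpr h))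
  simp only [hg]; rw [dif_pos hin]
  exact hf ⟨i, hin⟩ hpi

lemma UUt {U : Matrix (Fin n) (Fin n) ℝ} (hU : Uᵀ * U = 1) : U * Uᵀ = 1 :=
  mul_eq_one_comm.mp hU

lemma dot_U {U : Matrix (Fin n) (Fin n) ℝ} (hU : Uᵀ * U = 1) (y z : Fin n → ℝ) :
    (U *ᵥ y) ⬝ᵥ (U *ᵥ z) = y ⬝ᵥ z := by
  rw [Matrix.dotProduct_mulVec, ← Matrix.mulVec_transpose U (U *ᵥ y),
    Matrix.mulVec_mulVec, hU, Matrix.one_mulVec]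

/-- quadratic form of a conjugated diagonal -/
lemma quad_conj {U : Matrix (Fin n) (Fin n) ℝ} (hU : Uᵀ * U = 1) (g : Fin n → ℝ) (x : Fin n → ℝ) :
    x ⬝ᵥ ((U * diagonal g * Uᵀ) *ᵥ x) = ∑ i, g i * ((Uᵀ *ᵥ x) i)^2 := by
  rw [← Matrix.mulVec_mulVec, ← Matrix.mulVec_mulVec, Matrix.dotProduct_mulVec,
    ← Matrix.mulVec_transpose U x]
  simp only [dotProduct, Matrix.mulVec_diagonal]
  exact Finset.sum_congr rfl fun i _ => by ring

end helpers2

section conj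
variable {n : ℕ} {U : Matrix (Fin n) (Fin n) ℝ}

lemma dot_Ut (hU : Uᵀ * U = 1) (y z : Fin n → ℝ) :
    (Uᵀ *ᵥ y) ⬝ᵥ (Uᵀ *ᵥ z) = y ⬝ᵥ z :=
  dot_U (U := Uᵀ) (by rw [Matrix.transpose_transpose]; exact UUt hU) y z

lemma conjd_mul (hU : Uᵀ * U = 1) (f g : Fin n → ℝ) :
    (U * diagonal f * Uᵀ) * (U * diagonal g * Uᵀ) = U * diagonal (f * g) * Uᵀ := by
  have : diagonal f * (Uᵀ * U) * diagonal g = diagonal (f * g) := by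
    rw [hU, Matrix.mul_one, Matrix.diagonal_mul_diagonal]
    rfl
  calc (U * diagonal f * Uᵀ) * (U * diagonal g * Uᵀ)
      = U * (diagonal f * (Uᵀ * U) * diagonal g) * Uᵀ := by
        simp only [Matrix.mul_assoc]
    _ = U * diagonal (f * g) * Uᵀ := by rw [this]

lemma conj_one (hU : Uᵀ * U = 1) : U * diagonal (1 : Fin n → ℝ) * Uᵀ = 1 := by
  have h : (diagonal (1 : Fin n → ℝ)) = 1 := Matrix.diagonal_one
  rw [h, Matrix.mul_one, UUt hU]

lemma conj_transpose' (f : Fin n → ℝ) :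
    (U * diagonal f * Uᵀ)ᵀ = U * diagonal f * Uᵀ := by
  rw [Matrix.transpose_mul, Matrix.transpose_mul, Matrix.transpose_transpose,
    Matrix.diagonal_transpose, Matrix.mul_assoc]

lemma conj_norm_le (hU : Uᵀ * U = 1) {f : Fin n → ℝ} {c : ℝ} (hc : 0 ≤ c)
    (hf : ∀ i, |f i| ≤ c) : ‖U * diagonal f * Uᵀ‖ ≤ c := by
  apply l2_opNorm_le_of _ hc
  intro x
  set M := U * diagonal f * Uᵀ with hM
  have h1 : x ⬝ᵥ ((Mᵀ * M) *ᵥ x) = (M *ᵥ x) ⬝ᵥ (M *ᵥ x) := by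
    rw [← Matrix.mulVec_mulVec, Matrix.dotProduct_mulVec x Mᵀ, Matrix.vecMul_transpose]
  have h3 : Mᵀ * M = U * diagonal (f * f) * Uᵀ := by
    rw [hM, conj_transpose' f, conjd_mul hU]
  rw [← h1, h3, quad_conj hU]
  have h2 : ∑ i, (f * f) i * ((Uᵀ *ᵥ x) i)^2 ≤ ∑ i, c^2 * ((Uᵀ *ᵥ x) i)^2 := by
    apply Finset.sum_le_sum
    intro i _
    apply mul_le_mul_of_nonneg_right _ (sq_nonneg _)
    calc (f * f) i = |f i|^2 := by simp [Pi.mul_apply, sq, abs_mul_abs_self]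
      _ ≤ c^2 := by apply pow_le_pow_left₀ (abs_nonneg _) (hf i)
  calc ∑ i, (f * f) i * ((Uᵀ *ᵥ x) i)^2 ≤ ∑ i, c^2 * ((Uᵀ *ᵥ x) i)^2 := h2
    _ = c^2 * ((Uᵀ *ᵥ x) ⬝ᵥ (Uᵀ *ᵥ x)) := by
        simp only [dotProduct, Finset.mul_sum]
        exact Finset.sum_congr rfl fun i _ => by ring
    _ = c^2 * (x ⬝ᵥ x) := by rw [dot_Ut hU]

lemma conj_psd (hU : Uᵀ * U = 1) {f : Fin n → ℝ} (hf : ∀ i, 0 ≤ f i) (x : Fin n → ℝ) :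
    0 ≤ x ⬝ᵥ ((U * diagonal f * Uᵀ) *ᵥ x) := by
  rw [quad_conj hU]
  exact Finset.sum_nonneg fun i _ => mul_nonneg (hf i) (sq_nonneg _)

end conj

section W
variable {n : ℕ}

lemma weyl_one_sided {A A' U V : Matrix (Fin n) (Fin n) ℝ} {D E : Fin n → ℝ}
    (hU : Uᵀ * U = 1) (hV : Vᵀ * V = 1) (hD : Antitone D) (hE : Antitone E)
    (hA : A = U * diagonal D * Uᵀ) (hA' : A' = V * diagonal E * Vᵀ) (a : Fin n) :
    D a - ‖A - A'‖ ≤ E a := by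
  classical
  set p : ℕ := (a : ℕ) with hpdef
  have hpn : p < n := a.isLt
  have hp1 : p + 1 ≤ n := hpn
  have hpn' : p ≤ n := le_of_lt hpn
  set M : Matrix (Fin p) (Fin (p + 1)) ℝ :=
    Matrix.of (fun s t => (Vᵀ * U) (Fin.castLE hpn' s) (Fin.castLE hp1 t)) with hM
  -- find a nonzero kernel vector
  have hnotinj : ¬ Function.Injective M.mulVecLin := by
    intro hinj
    have := LinearMap.finrank_le_finrank_of_injective hinj
    simp [Module.finrank_pi] at this
  rw [Function.not_injective_iff] at hnotinj
  obtain ⟨y, z, hyz, hne⟩ := hnotinj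
  set c : Fin (p + 1) → ℝ := y - z with hc
  have hc0 : c ≠ 0 := sub_ne_zero_of_ne hne
  have hMc : M *ᵥ c = 0 := by
    have : M.mulVecLin (y - z) = 0 := by rw [map_sub, hyz, sub_self]
    simpa using this
  set c' : Fin n → ℝ := fun t => if h : (t : ℕ) < p + 1 then c ⟨t, h⟩ else 0 with hc'
  have hc'0 : c' ≠ 0 := by
    obtain ⟨t, ht⟩ := Function.ne_iff.mp hc0
    intro h
    apply ht
    have := congrFun h (Fin.castLE hp1 t)
    simpa [hc', t.isLt, Nat.le_of_lt_succ t.isLt] using this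
  set x : Fin n → ℝ := U *ᵥ c' with hx
  have hUtx : Uᵀ *ᵥ x = c' := by
    rw [hx, Matrix.mulVec_mulVec, hU, Matrix.one_mulVec]
  have hS : x ⬝ᵥ x = c' ⬝ᵥ c' := dot_U hU c' c'
  have hSpos : 0 < x ⬝ᵥ x := by
    rw [hS]
    rcases lt_or_eq_of_le (Finset.sum_nonneg fun i _ => mul_self_nonneg (c' i) :
      (0:ℝ) ≤ c' ⬝ᵥ c') with h | h
    · exact h
    · exact absurd ((dotProduct_self_eq_zero).mp h.symm) hc'0
  -- quadratic form wrt A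
  have hqA : D a * (x ⬝ᵥ x) ≤ x ⬝ᵥ (A *ᵥ x) := by
    rw [hA, quad_conj hU, hUtx, hS]
    have : ∀ i : Fin n, D a * (c' i)^2 ≤ D i * (c' i)^2 := by
      intro i
      by_cases hi : (i : ℕ) < p + 1
      · have hia : i ≤ a := by
          rw [Fin.le_def]; omega
        exact mul_le_mul_of_nonneg_right (hD hia) (sq_nonneg _)
      · simp [hc', hi, show ¬ (i:ℕ) ≤ p by omega]
    calc D a * (c' ⬝ᵥ c') = ∑ i, D a * (c' i)^2 := by
          simp only [dotProduct, Finset.mul_sum]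
          exact Finset.sum_congr rfl fun i _ => by ring
      _ ≤ ∑ i, D i * (c' i)^2 := Finset.sum_le_sum fun i _ => this i
  -- quadratic form wrt A'
  set d : Fin n → ℝ := Vᵀ *ᵥ x with hd
  have hd0 : ∀ s : Fin n, (s : ℕ) < p → d s = 0 := by
    intro s hs
    have hdd : d s = ∑ t, (Vᵀ * U) s t * c' t := by
      rw [hd, hx, Matrix.mulVec_mulVec]
      simp [Matrix.mulVec, dotProduct]
    rw [hdd, sum_fin_cast hp1 _ (fun t ht => by simp [hc', not_lt.mpr ht, show ¬ (t:ℕ) ≤ p by omega])]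
    have : ∀ t : Fin (p+1), (Vᵀ * U) s (Fin.castLE hp1 t) * c' (Fin.castLE hp1 t)
        = M ⟨s, hs⟩ t * c t := by
      intro t
      have h1 : (Fin.castLE hpn' (⟨(s : ℕ), hs⟩ : Fin p)) = s := Fin.ext rfl
      have h2 : c' (Fin.castLE hp1 t) = c t := by
        simp only [hc']
        rw [dif_pos (by simpa using t.isLt)]
        exact congrArg c (Fin.ext rfl)
      simp only [hM, Matrix.of_apply, h1, h2]
    rw [Finset.sum_congr rfl (fun t _ => this t)]
    have := congrFun hMc ⟨s, hs⟩
    simpa [Matrix.mulVec, dotProduct] using this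
  have hqA' : x ⬝ᵥ (A' *ᵥ x) ≤ E a * (x ⬝ᵥ x) := by
    rw [hA', quad_conj hV, ← hd]
    have hdx : d ⬝ᵥ d = x ⬝ᵥ x := dot_Ut hV x x
    have : ∀ s : Fin n, E s * (d s)^2 ≤ E a * (d s)^2 := by
      intro s
      by_cases hs : (s : ℕ) < p
      · rw [hd0 s hs]; simp
      · have has : a ≤ s := by rw [Fin.le_def]; omega
        exact mul_le_mul_of_nonneg_right (hE has) (sq_nonneg _)
    calc ∑ s, E s * (d s)^2 ≤ ∑ s, E a * (d s)^2 := Finset.sum_le_sum fun s _ => this s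
      _ = E a * (d ⬝ᵥ d) := by
          simp only [dotProduct, Finset.mul_sum]
          exact Finset.sum_congr rfl fun s _ => by ring
      _ = E a * (x ⬝ᵥ x) := by rw [hdx]
  have hpert : x ⬝ᵥ (A *ᵥ x) - x ⬝ᵥ (A' *ᵥ x) ≤ ‖A - A'‖ * (x ⬝ᵥ x) := by
    have h1 : x ⬝ᵥ (A *ᵥ x) - x ⬝ᵥ (A' *ᵥ x) = x ⬝ᵥ ((A - A') *ᵥ x) := by
      rw [Matrix.sub_mulVec, dotProduct_sub]
    rw [h1]
    exact le_trans (le_abs_self _) (quad_le_norm _ x)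
  nlinarith [hqA, hqA', hpert, hSpos]

end W

section Core
variable {n : ℕ}

noncomputable def lowMask (n k : ℕ) : Fin n → ℝ := fun i => if (i : ℕ) < k then 1 else 0

lemma lowMask_idem (k : ℕ) : lowMask n k * lowMask n k = lowMask n k := by
  funext i; simp only [lowMask, Pi.mul_apply]; by_cases h : (i:ℕ) < k <;> simp [h]

/-- Core of the sin-theta argument. -/
lemma sin_half {k : ℕ} {M N U V P Q : Matrix (Fin n) (Fin n) ℝ} {f g : Fin n → ℝ}
    (hU : Uᵀ * U = 1) (hV : Vᵀ * V = 1)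
    (hM : M = U * diagonal f * Uᵀ) (hN : N = V * diagonal g * Vᵀ)
    (hP : P = U * diagonal (lowMask n k) * Uᵀ) (hQ : Q = V * diagonal (lowMask n k) * Vᵀ)
    {α β ε : ℝ} (hα0 : 0 ≤ α) (hα : ∀ i : Fin n, k ≤ (i : ℕ) → |f i| ≤ α)
    (hβ : ∀ s : Fin n, (s : ℕ) < k → β ≤ g s) (hβpos : 0 < β)
    (hnorm : ‖M - N‖ ≤ ε) :
    (β - α) * ‖(1 - P) * Q‖ ≤ ε := by
  have hεnn : 0 ≤ ε := le_trans (norm_nonneg _) hnorm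
  set X := (1 - P) * Q with hX
  -- basic conj expressions
  have h1mP : 1 - P = U * diagonal (1 - lowMask n k) * Uᵀ := by
    rw [hP, ← conj_one hU]
    rw [show diagonal ((1 : Fin n → ℝ) - lowMask n k)
        = diagonal 1 - diagonal (lowMask n k) from (Matrix.diagonal_sub 1 (lowMask n k)).symm]
    rw [Matrix.mul_sub, Matrix.sub_mul]
  have h1mQ : 1 - Q = V * diagonal (1 - lowMask n k) * Vᵀ := by
    rw [hQ, ← conj_one hV]
    rw [show diagonal ((1 : Fin n → ℝ) - lowMask n k)
        = diagonal 1 - diagonal (lowMask n k) from (Matrix.diagonal_sub 1 (lowMask n k)).symm]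
    rw [Matrix.mul_sub, Matrix.sub_mul]
  -- commutation
  have hMP : M * (1 - P) = (1 - P) * M := by
    rw [hM, h1mP, conjd_mul hU, conjd_mul hU, mul_comm]
  have hNQ : Q * N = N * Q := by
    rw [hN, hQ, conjd_mul hV, conjd_mul hV, mul_comm]
  -- Sylvester identity
  have hR : M * X - X * N = (1 - P) * (M - N) * Q := by
    have e1 : M * X = ((1 - P) * M) * Q := by
      rw [hX, ← Matrix.mul_assoc, hMP]
    have e2 : X * N = ((1 - P) * N) * Q := by
      rw [hX, Matrix.mul_assoc, hNQ, ← Matrix.mul_assoc]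
    rw [e1, e2, ← Matrix.sub_mul, ← Matrix.mul_sub]
  have hRnorm : ‖(1 - P) * (M - N) * Q‖ ≤ ε := by
    have h1 : ‖(1 - P)‖ ≤ 1 := by
      rw [h1mP]
      apply conj_norm_le hU zero_le_one
      intro i
      simp only [lowMask, Pi.sub_apply, Pi.one_apply]
      by_cases h : (i:ℕ) < k <;> simp [h]
    have h2 : ‖Q‖ ≤ 1 := by
      rw [hQ]
      apply conj_norm_le hV zero_le_one
      intro i
      simp only [lowMask]
      by_cases h : (i:ℕ) < k <;> simp [h]
    calc ‖(1 - P) * (M - N) * Q‖ ≤ ‖(1 - P) * (M - N)‖ * ‖Q‖ := Matrix.l2_opNorm_mul _ _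
      _ ≤ (‖1 - P‖ * ‖M - N‖) * ‖Q‖ := by
          apply mul_le_mul_of_nonneg_right (Matrix.l2_opNorm_mul _ _) (norm_nonneg _)
      _ ≤ (1 * ε) * 1 := by
          apply mul_le_mul _ h2 (norm_nonneg _) (by positivity)
          exact mul_le_mul h1 hnorm (norm_nonneg _) zero_le_one
      _ = ε := by ring
  -- upper bound on ‖M * X‖
  have hMX : ‖M * X‖ ≤ α * ‖X‖ := by
    have hXfix : (1 - P) * X = X := by
      rw [hX, ← Matrix.mul_assoc, h1mP, conjd_mul hU]
      have : (1 - lowMask n k) * (1 - lowMask n k) = 1 - lowMask n k := by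
        funext i; simp only [lowMask, Pi.mul_apply, Pi.sub_apply, Pi.one_apply]
        by_cases h : (i:ℕ) < k <;> simp [h]
      rw [this, ← h1mP]
    have e3 : M * X = (M * (1 - P)) * X := by
      rw [Matrix.mul_assoc, hXfix]
    have hMPnorm : ‖M * (1 - P)‖ ≤ α := by
      rw [hM, h1mP, conjd_mul hU]
      apply conj_norm_le hU hα0
      intro i
      simp only [lowMask, Pi.mul_apply, Pi.sub_apply, Pi.one_apply]
      by_cases h : (i:ℕ) < k
      · simp [h, hα0]
      · simpa [h] using hα i (le_of_not_gt h)
    calc ‖M * X‖ = ‖(M * (1 - P)) * X‖ := by rw [← e3]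
      _ ≤ ‖M * (1 - P)‖ * ‖X‖ := Matrix.l2_opNorm_mul _ _
      _ ≤ α * ‖X‖ := mul_le_mul_of_nonneg_right hMPnorm (norm_nonneg _)
  -- lower bound: β * ‖X‖ ≤ ‖X * N‖
  have hlow : β * ‖X‖ ≤ ‖X * N‖ := by
    set gg : Fin n → ℝ := fun s => if (s : ℕ) < k then g s else β with hgg
    have hggpos : ∀ s, β ≤ gg s := by
      intro s; simp only [hgg]
      by_cases h : (s:ℕ) < k
      · simpa [h] using hβ s h
      · simp [h]
    set B := V * diagonal gg * Vᵀ with hB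
    set Binv := V * diagonal (fun s => (gg s)⁻¹) * Vᵀ with hBinv
    have hBB : B * Binv = 1 := by
      rw [hB, hBinv, conjd_mul hV]
      have : gg * (fun s => (gg s)⁻¹) = 1 := by
        funext s
        exact mul_inv_cancel₀ (ne_of_gt (lt_of_lt_of_le hβpos (hggpos s)))
      rw [this, conj_one hV]
    have hBinvnorm : ‖Binv‖ ≤ β⁻¹ := by
      rw [hBinv]
      apply conj_norm_le hV (inv_nonneg.mpr hβpos.le)
      intro s
      rw [abs_of_nonneg (inv_nonneg.mpr (le_trans hβpos.le (hggpos s)))]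
      exact inv_anti₀ hβpos (hggpos s)
    have hXQ : X * Q = X := by
      rw [hX, Matrix.mul_assoc, hQ, conjd_mul hV, lowMask_idem, ← hQ]
    have hXB : X * B = X * N := by
      have hQB : Q * (B - N) = 0 := by
        rw [hB, hN, hQ]
        rw [show V * diagonal gg * Vᵀ - V * diagonal g * Vᵀ
            = V * diagonal (gg - g) * Vᵀ by
          rw [show diagonal (gg - g) = diagonal gg - diagonal g from
            (Matrix.diagonal_sub gg g).symm, Matrix.mul_sub, Matrix.sub_mul]]
        rw [conjd_mul hV]
        have : lowMask n k * (gg - g) = 0 := by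
          funext s
          simp only [lowMask, hgg, Pi.mul_apply, Pi.sub_apply, Pi.zero_apply]
          by_cases h : (s:ℕ) < k <;> simp [h]
        rw [this, show diagonal (0 : Fin n → ℝ) = (0 : Matrix (Fin n) (Fin n) ℝ) from
          Matrix.diagonal_zero, Matrix.mul_zero, Matrix.zero_mul]
      have h4 : X * (B - N) = 0 := by
        calc X * (B - N) = (X * Q) * (B - N) := by rw [hXQ]
          _ = X * (Q * (B - N)) := by rw [Matrix.mul_assoc]
          _ = 0 := by rw [hQB, Matrix.mul_zero]
      rw [Matrix.mul_sub] at h4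
      exact sub_eq_zero.mp h4
    have : ‖X‖ ≤ ‖X * N‖ * β⁻¹ := by
      calc ‖X‖ = ‖X * B * Binv‖ := by rw [Matrix.mul_assoc, hBB, Matrix.mul_one]
        _ ≤ ‖X * B‖ * ‖Binv‖ := Matrix.l2_opNorm_mul _ _
        _ = ‖X * N‖ * ‖Binv‖ := by rw [hXB]
        _ ≤ ‖X * N‖ * β⁻¹ := mul_le_mul_of_nonneg_left hBinvnorm (norm_nonneg _)
    calc β * ‖X‖ ≤ β * (‖X * N‖ * β⁻¹) := mul_le_mul_of_nonneg_left this (le_of_lt hβpos)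
      _ = ‖X * N‖ := by field_simp
  -- combine
  have hfinal : ‖X * N‖ ≤ α * ‖X‖ + ε := by
    have : X * N = M * X - (1 - P) * (M - N) * Q := by rw [← hR, sub_sub_cancel]
    calc ‖X * N‖ = ‖M * X - (1 - P) * (M - N) * Q‖ := by rw [← this]
      _ ≤ ‖M * X‖ + ‖(1 - P) * (M - N) * Q‖ := norm_sub_le _ _
      _ ≤ α * ‖X‖ + ε := add_le_add hMX hRnorm
  nlinarith [le_trans hlow hfinal]

/-- bound on the difference of two orthogonal projections -/
lemma mulVec_dot (M : Matrix (Fin n) (Fin n) ℝ) (a b : Fin n → ℝ) :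
    (M *ᵥ a) ⬝ᵥ b = a ⬝ᵥ (Mᵀ *ᵥ b) := by
  rw [Matrix.dotProduct_mulVec a Mᵀ b, Matrix.vecMul_transpose]

lemma proj_diff_norm {P Q : Matrix (Fin n) (Fin n) ℝ}
    (hPt : Pᵀ = P) (hQt : Qᵀ = Q) (hP2 : P * P = P) (hQ2 : Q * Q = Q) {c : ℝ}
    (h1 : ‖P * (1 - Q)‖ ≤ c) (h2 : ‖(1 - P) * Q‖ ≤ c) : ‖P - Q‖ ≤ c := by
  have hc : 0 ≤ c := le_trans (norm_nonneg _) h1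
  apply l2_opNorm_le_of _ hc
  intro x
  set u : Fin n → ℝ := (1 - Q) *ᵥ x with hu
  set v : Fin n → ℝ := Q *ᵥ x with hv
  have e1 : (P - Q) *ᵥ x = (P * (1 - Q)) *ᵥ x - ((1 - P) * Q) *ᵥ x := by
    have : P - Q = P * (1 - Q) - (1 - P) * Q := by noncomm_ring
    rw [this, Matrix.sub_mulVec]
  have e2 : (P * (1 - Q)) *ᵥ x = P *ᵥ u := by rw [hu, Matrix.mulVec_mulVec]
  have e3 : ((1 - P) * Q) *ᵥ x = (1 - P) *ᵥ v := by rw [hv, Matrix.mulVec_mulVec]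
  -- orthogonality
  have orth : (P *ᵥ u) ⬝ᵥ ((1 - P) *ᵥ v) = 0 := by
    rw [Matrix.dotProduct_mulVec (P *ᵥ u) (1 - P) v]
    have : (P *ᵥ u) ᵥ* (1 - P) = ((1 - P) * P) *ᵥ u := by
      rw [← Matrix.mulVec_transpose, Matrix.mulVec_mulVec]
      congr 1
      rw [Matrix.transpose_sub, Matrix.transpose_one, hPt]
    rw [this]
    have : (1 - P) * P = 0 := by
      rw [Matrix.sub_mul, Matrix.one_mul, hP2, sub_self]
    rw [this, Matrix.zero_mulVec, zero_dotProduct]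
  -- pythagoras decomposition of image
  have himg : ((P - Q) *ᵥ x) ⬝ᵥ ((P - Q) *ᵥ x)
      = (P *ᵥ u) ⬝ᵥ (P *ᵥ u) + ((1 - P) *ᵥ v) ⬝ᵥ ((1 - P) *ᵥ v) := by
    have horth2 : ((1 - P) *ᵥ v) ⬝ᵥ (P *ᵥ u) = 0 := by
      rw [dotProduct_comm]; exact orth
    rw [e1, e2, e3, sub_dotProduct, dotProduct_sub, dotProduct_sub,
      orth, horth2]
    ring
  -- bounds on each piece
  have hb1 : (P *ᵥ u) ⬝ᵥ (P *ᵥ u) ≤ c^2 * (u ⬝ᵥ u) := by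
    have hid : (1 - Q) *ᵥ u = u := by
      rw [hu, Matrix.mulVec_mulVec, show (1 - Q) * (1 - Q) = 1 - Q from by
        calc (1 - Q) * (1 - Q) = 1 - Q - Q + Q * Q := by noncomm_ring
          _ = 1 - Q := by rw [hQ2]; abel]
    have : P *ᵥ u = (P * (1 - Q)) *ᵥ u := by
      rw [← Matrix.mulVec_mulVec, hid]
    rw [this]
    calc ((P * (1 - Q)) *ᵥ u) ⬝ᵥ ((P * (1 - Q)) *ᵥ u) ≤ ‖P * (1 - Q)‖^2 * (u ⬝ᵥ u) :=
          l2_norm_mulVec _ _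
      _ ≤ c^2 * (u ⬝ᵥ u) := by
          apply mul_le_mul_of_nonneg_right (pow_le_pow_left₀ (norm_nonneg _) h1 2)
          exact Finset.sum_nonneg fun i _ => mul_self_nonneg _
  have hb2 : ((1 - P) *ᵥ v) ⬝ᵥ ((1 - P) *ᵥ v) ≤ c^2 * (v ⬝ᵥ v) := by
    have hid : Q *ᵥ v = v := by
      rw [hv, Matrix.mulVec_mulVec, hQ2]
    have : (1 - P) *ᵥ v = ((1 - P) * Q) *ᵥ v := by
      rw [← Matrix.mulVec_mulVec, hid]
    rw [this]
    calc (((1 - P) * Q) *ᵥ v) ⬝ᵥ (((1 - P) * Q) *ᵥ v) ≤ ‖(1 - P) * Q‖^2 * (v ⬝ᵥ v) :=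
          l2_norm_mulVec _ _
      _ ≤ c^2 * (v ⬝ᵥ v) := by
          apply mul_le_mul_of_nonneg_right (pow_le_pow_left₀ (norm_nonneg _) h2 2)
          exact Finset.sum_nonneg fun i _ => mul_self_nonneg _
  -- pythagoras on domain
  have hpyth : u ⬝ᵥ u + v ⬝ᵥ v = x ⬝ᵥ x := by
    have hvv : v ⬝ᵥ v = x ⬝ᵥ v := by
      calc v ⬝ᵥ v = (Q *ᵥ x) ⬝ᵥ v := by rw [hv]
        _ = x ⬝ᵥ (Qᵀ *ᵥ v) := mulVec_dot Q x v
        _ = x ⬝ᵥ v := by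
            rw [hQt, hv, Matrix.mulVec_mulVec, hQ2]
    have hu_eq : u = x - v := by
      rw [hu, hv, Matrix.sub_mulVec, Matrix.one_mulVec]
    have expand : u ⬝ᵥ u = x ⬝ᵥ x - x ⬝ᵥ v - (v ⬝ᵥ x - v ⬝ᵥ v) := by
      rw [hu_eq, sub_dotProduct, dotProduct_sub, dotProduct_sub]
    have hcomm : v ⬝ᵥ x = x ⬝ᵥ v := dotProduct_comm v x
    linarith [hvv, expand, hcomm]
  calc ((P - Q) *ᵥ x) ⬝ᵥ ((P - Q) *ᵥ x)
      = (P *ᵥ u) ⬝ᵥ (P *ᵥ u) + ((1 - P) *ᵥ v) ⬝ᵥ ((1 - P) *ᵥ v) := himg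
    _ ≤ c^2 * (u ⬝ᵥ u) + c^2 * (v ⬝ᵥ v) := add_le_add hb1 hb2
    _ = c^2 * (u ⬝ᵥ u + v ⬝ᵥ v) := by ring
    _ = c^2 * (x ⬝ᵥ x) := by rw [hpyth]

end Core

section Eig
open Polynomial
variable {n : ℕ}

lemma conjT_eq_transpose (M : Matrix (Fin n) (Fin n) ℝ) : Mᴴ = Mᵀ := by
  ext i j; simp [Matrix.conjTranspose_apply]

lemma charpoly_conj_orth {U : Matrix (Fin n) (Fin n) ℝ} (hU : Uᵀ * U = 1) (f : Fin n → ℝ) :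
    (U * diagonal f * Uᵀ).charpoly = ∏ i, (X - C (f i)) := by
  classical
  have hUU : U * Uᵀ = 1 := mul_eq_one_comm.mp hU
  have hkey : charmatrix (U * diagonal f * Uᵀ)
      = (C : ℝ →+* ℝ[X]).mapMatrix U * charmatrix (diagonal f) * (C : ℝ →+* ℝ[X]).mapMatrix Uᵀ := by
    unfold charmatrix
    rw [Matrix.mul_sub, Matrix.sub_mul]
    congr 1
    · have h1 : (C : ℝ →+* ℝ[X]).mapMatrix U * Matrix.scalar (Fin n) (X : ℝ[X]) =
          Matrix.scalar (Fin n) (X : ℝ[X]) * (C : ℝ →+* ℝ[X]).mapMatrix U :=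
        (Matrix.scalar_commute (X : ℝ[X]) (fun r' => Commute.all _ _) _).symm
      rw [h1, Matrix.mul_assoc, ← _root_.map_mul, hUU]
      simp
    · rw [_root_.map_mul, _root_.map_mul]
  have hdiag : charmatrix (diagonal f) = diagonal (fun i => (X : ℝ[X]) - C (f i)) := by
    ext i j
    by_cases h : i = j
    · subst h; simp [charmatrix_apply, Matrix.diagonal_apply_eq]
    · simp [charmatrix_apply, Matrix.diagonal_apply_ne _ h, h]
  rw [Matrix.charpoly, hkey, Matrix.det_mul, Matrix.det_mul, hdiag, Matrix.det_diagonal]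
  have h2 : ((C : ℝ →+* ℝ[X]).mapMatrix U).det * ((C : ℝ →+* ℝ[X]).mapMatrix Uᵀ).det
      = (1 : ℝ[X]) := by
    rw [← RingHom.map_det, ← RingHom.map_det, ← _root_.map_mul, ← Matrix.det_mul, hUU]
    simp
  calc ((C : ℝ →+* ℝ[X]).mapMatrix U).det * (∏ i, ((X : ℝ[X]) - C (f i)))
        * ((C : ℝ →+* ℝ[X]).mapMatrix Uᵀ).det
      = (((C : ℝ →+* ℝ[X]).mapMatrix U).det * ((C : ℝ →+* ℝ[X]).mapMatrix Uᵀ).det)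
        * (∏ i, ((X : ℝ[X]) - C (f i))) := by ring
    _ = ∏ i, ((X : ℝ[X]) - C (f i)) := by rw [h2, one_mul]

lemma multiset_eq_of_charpoly {f g : Fin n → ℝ}
    (h : (∏ i, (X - C (f i))) = ∏ i, (X - C (g i))) :
    (univ.val.map f) = (univ.val.map g) := by
  have hf : (∏ i, ((X:ℝ[X]) - C (f i))) = ((univ.val.map f).map (fun r => X - C r)).prod := by
    rw [Finset.prod_eq_multiset_prod, Multiset.map_map]
    rfl
  have hg : (∏ i, ((X:ℝ[X]) - C (g i))) = ((univ.val.map g).map (fun r => X - C r)).prod := by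
    rw [Finset.prod_eq_multiset_prod, Multiset.map_map]
    rfl
  have := congrArg Polynomial.roots (hf.symm.trans (h.trans hg))
  rwa [Polynomial.roots_multiset_prod_X_sub_C, Polynomial.roots_multiset_prod_X_sub_C] at this

lemma monotone_eq_of_multiset {f g : Fin n → ℝ} (hf : Monotone f) (hg : Monotone g)
    (h : univ.val.map f = univ.val.map g) : f = g := by
  have hlist : (List.ofFn f : Multiset ℝ) = (List.ofFn g : Multiset ℝ) := by
    rw [List.ofFn_eq_map, List.ofFn_eq_map]
    have huniv : (univ : Finset (Fin n)).val = ↑(List.finRange n) := rfl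
    rw [huniv] at h
    simpa using h
  exact List.ofFn_injective
    (List.Perm.eq_of_sortedLE hf.sortedLE_ofFn hg.sortedLE_ofFn (Multiset.coe_eq_coe.mp hlist))

/-- multiset of any eigendecomposition diagonal equals multiset of mathlib eigenvalues -/
lemma multiset_eig {A U : Matrix (Fin n) (Fin n) ℝ} {D : Fin n → ℝ} (hH : A.IsHermitian)
    (hU : Uᵀ * U = 1) (hAeig : A = U * diagonal D * Uᵀ) :
    univ.val.map D = univ.val.map hH.eigenvalues := by
  have h1 : A.charpoly = ∏ i, (X - C (D i)) := by rw [hAeig]; exact charpoly_conj_orth hU D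
  have hU0 : ((hH.eigenvectorUnitary : Matrix (Fin n) (Fin n) ℝ))ᵀ *
      (hH.eigenvectorUnitary : Matrix (Fin n) (Fin n) ℝ) = 1 := by
    rw [← conjT_eq_transpose]
    exact hH.eigenvectorUnitary.2.1
  have hdiag : diagonal (RCLike.ofReal ∘ hH.eigenvalues) = diagonal hH.eigenvalues :=
    congrArg diagonal (funext fun i => by simp)
  have hstar : star ((hH.eigenvectorUnitary : Matrix (Fin n) (Fin n) ℝ))
      = ((hH.eigenvectorUnitary : Matrix (Fin n) (Fin n) ℝ))ᵀ := by
    rw [Matrix.star_eq_conjTranspose, conjT_eq_transpose]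
  have hspec : A = (hH.eigenvectorUnitary : Matrix (Fin n) (Fin n) ℝ) *
      diagonal hH.eigenvalues * ((hH.eigenvectorUnitary : Matrix (Fin n) (Fin n) ℝ))ᵀ := by
    calc A = _ := hH.spectral_theorem
      _ = _ := by rw [Unitary.conjStarAlgAut_apply, hdiag, hstar]
  have h2 : A.charpoly = ∏ i, (X - C (hH.eigenvalues i)) :=
    (congrArg Matrix.charpoly hspec).trans (charpoly_conj_orth hU0 _)
  exact multiset_eq_of_charpoly (h1.symm.trans h2)

lemma sorted_eig_eq {A U : Matrix (Fin n) (Fin n) ℝ} {D : Fin n → ℝ} (hH : A.IsHermitian)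
    (hU : Uᵀ * U = 1) (hD : Antitone D) (hAeig : A = U * diagonal D * Uᵀ) :
    hH.eigenvalues ∘ Tuple.sort hH.eigenvalues = D ∘ Fin.rev := by
  apply monotone_eq_of_multiset (Tuple.monotone_sort _)
    (fun a b hab => hD ((Fin.rev_le_rev).mpr hab))
  have hperm : ∀ (σ : Equiv.Perm (Fin n)) (f : Fin n → ℝ),
      univ.val.map (f ∘ σ) = univ.val.map f := by
    intro σ f
    have : univ.val.map (σ : Fin n → Fin n) = univ.val := by
      have h5 := Finset.map_univ_equiv σ
      calc univ.val.map (σ : Fin n → Fin n) = (univ.map σ.toEmbedding).val := by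
            rw [Finset.map_val]; rfl
        _ = univ.val := by rw [h5]
    calc univ.val.map (f ∘ σ) = (univ.val.map σ).map f := by
          rw [Multiset.map_map]
      _ = univ.val.map f := by rw [this]
  exact (hperm (Tuple.sort hH.eigenvalues) hH.eigenvalues).trans
    ((multiset_eig hH hU hAeig).symm.trans (hperm Fin.revPerm D).symm)

end Eig

section Fin2
variable {n : ℕ}

lemma diag_nonneg {A U : Matrix (Fin n) (Fin n) ℝ} {D : Fin n → ℝ} (hA : A.PosSemidef)
    (hU : Uᵀ * U = 1) (hAeig : A = U * diagonal D * Uᵀ) (i : Fin n) : 0 ≤ D i := by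
  classical
  set y : Fin n → ℝ := Pi.single i 1 with hy
  set x : Fin n → ℝ := U *ᵥ y with hx
  have h0 : (0:ℝ) ≤ x ⬝ᵥ (A *ᵥ x) := by
    have := hA.dotProduct_mulVec_nonneg x
    simpa using this
  have h1 : x ⬝ᵥ (A *ᵥ x) = D i := by
    rw [hAeig, quad_conj hU]
    have hUtx : Uᵀ *ᵥ x = y := by
      rw [hx, Matrix.mulVec_mulVec, hU, Matrix.one_mulVec]
    rw [hUtx]
    rw [Finset.sum_eq_single i]
    · simp [hy]
    · intro t _ ht
      simp [hy, Pi.single_eq_of_ne ht]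
    · intro h; exact absurd (Finset.mem_univ i) h
  rw [h1] at h0
  exact h0

lemma sub_mul_sub_eq {k : ℕ} (hkn : k ≤ n) (U : Matrix (Fin n) (Fin n) ℝ) :
    (U.submatrix id (Fin.castLE hkn)) * (U.submatrix id (Fin.castLE hkn))ᵀ
      = U * diagonal (lowMask n k) * Uᵀ := by
  ext i jx
  rw [Matrix.mul_apply, Matrix.mul_apply]
  have hrhs : ∀ t, (U * diagonal (lowMask n k)) i t * Uᵀ t jx
      = U i t * lowMask n k t * U jx t := by
    intro t
    rw [Matrix.mul_diagonal, Matrix.transpose_apply]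
  rw [Finset.sum_congr rfl (fun t _ => hrhs t)]
  rw [sum_fin_cast hkn (fun t => U i t * lowMask n k t * U jx t)
    (fun t ht => by simp [lowMask, not_lt.mpr ht])]
  refine Finset.sum_congr rfl fun t _ => ?_
  have hm : lowMask n k (Fin.castLE hkn t) = 1 := by
    simp [lowMask, t.isLt]
  rw [Matrix.transpose_apply, Matrix.submatrix_apply, hm]
  simp

end Fin2


open scoped Classical in
lemma eigvalsDesc_eq {n : ℕ} {A U : Matrix (Fin n) (Fin n) ℝ} {D : Fin n → ℝ}
    (hH : A.IsHermitian) (hU : Uᵀ * U = 1) (hD : Antitone D)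
    (hAeig : A = U * Matrix.diagonal D * Uᵀ) {i : ℕ} (hin : i < n) :
    eigvalsDesc A i = D ⟨i, hin⟩ := by
  unfold eigvalsDesc
  rw [dif_pos (⟨hH, hin⟩ : A.IsHermitian ∧ i < n)]
  have hkey := sorted_eig_eq hH hU hD hAeig
  have h2 := congrFun hkey (Fin.rev ⟨i, hin⟩)
  simp only [Function.comp] at h2
  rw [Fin.rev_rev] at h2
  exact h2

/-- consequence of the Davis–Kahan sin Θ theorem. `A` and `A'` are PSD
with eigendecompositions `A = U (diagonal D) Uᵗ`, `A' = V (diagonal E) Vᵗ` (eigenvalues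
nonincreasing), both having eigengaps `λ_k > λ_{k+1}`, so the dominant `k`-dimensional
invariant subspaces are unique with orthogonal projections `P = U₁ U₁ᵗ` and `Q = V₁ V₁ᵗ`
(`U₁`, `V₁` the first `k` eigenvector columns).  If `‖A − A'‖₂ ≤ C λ_j(A)` for some `C > 0`
and `j ≥ k`, and `λ_k(A) − λ_{k+1}(A) − C λ_j(A) > 0`, then
`‖P − Q‖₂ ≤ C λ_j(A) / (λ_k(A) − λ_{k+1}(A) − C λ_j(A))`. -/
theorem davis_kahan_dominant_subspace_bound {n k j : ℕ}
    (hk1 : 1 ≤ k) (hkj : k ≤ j) (hjn : j ≤ n)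
    (A A' : Matrix (Fin n) (Fin n) ℝ) (hA : A.PosSemidef) (hA' : A'.PosSemidef)
    (U V : Matrix (Fin n) (Fin n) ℝ) (D E : Fin n → ℝ)
    (hU : Uᵀ * U = 1) (hV : Vᵀ * V = 1) (hD : Antitone D) (hE : Antitone E)
    (hAeig : A = U * Matrix.diagonal D * Uᵀ)
    (hA'eig : A' = V * Matrix.diagonal E * Vᵀ)
    (hgapA : eigvalsDesc A k < eigvalsDesc A (k - 1))
    (hgapA' : eigvalsDesc A' k < eigvalsDesc A' (k - 1))
    (P Q : Matrix (Fin n) (Fin n) ℝ)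
    (hP : P = (U.submatrix id (Fin.castLE (hkj.trans hjn))) *
        (U.submatrix id (Fin.castLE (hkj.trans hjn)))ᵀ)
    (hQ : Q = (V.submatrix id (Fin.castLE (hkj.trans hjn))) *
        (V.submatrix id (Fin.castLE (hkj.trans hjn)))ᵀ)
    (C : ℝ) (hC : 0 < C)
    (hclose : ‖A - A'‖ ≤ C * eigvalsDesc A (j - 1))
    (hgap : 0 < eigvalsDesc A (k - 1) - eigvalsDesc A k - C * eigvalsDesc A (j - 1)) :
    ‖P - Q‖ ≤ C * eigvalsDesc A (j - 1) /
      (eigvalsDesc A (k - 1) - eigvalsDesc A k - C * eigvalsDesc A (j - 1)) := by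
  classical
  have hH : A.IsHermitian := hA.1
  have hH' : A'.IsHermitian := hA'.1
  have hkn : k ≤ n := hkj.trans hjn
  have hRHSnn : 0 ≤ C * eigvalsDesc A (j - 1) /
      (eigvalsDesc A (k - 1) - eigvalsDesc A k - C * eigvalsDesc A (j - 1)) :=
    div_nonneg (le_trans (norm_nonneg _) hclose) hgap.le
  rcases eq_or_lt_of_le hkn with hkeq | hklt
  · -- trivial case k = n : both projections are the identity
    subst hkeq
    have hsubU : U.submatrix id (Fin.castLE (hkj.trans hjn)) = U := by
      ext i t
      rfl
    have hsubV : V.submatrix id (Fin.castLE (hkj.trans hjn)) = V := by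
      ext i t
      rfl
    have hP1 : P = 1 := by rw [hP, hsubU, UUt hU]
    have hQ1 : Q = 1 := by rw [hQ, hsubV, UUt hV]
    rw [hP1, hQ1, sub_self]
    simpa using hRHSnn
  · -- main case k < n
    have hk1n : k - 1 < n := by omega
    have hj1n : j - 1 < n := by omega
    set a : Fin n := ⟨k - 1, hk1n⟩ with hadef
    set b : Fin n := ⟨k, hklt⟩ with hbdef
    set jj : Fin n := ⟨j - 1, hj1n⟩ with hjjdef
    have hDa : eigvalsDesc A (k - 1) = D a := eigvalsDesc_eq hH hU hD hAeig hk1n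
    have hDb : eigvalsDesc A k = D b := eigvalsDesc_eq hH hU hD hAeig hklt
    have hDj : eigvalsDesc A (j - 1) = D jj := eigvalsDesc_eq hH hU hD hAeig hj1n
    rw [hDa, hDb, hDj] at hgap ⊢
    rw [hDj] at hclose
    set ε : ℝ := C * D jj with hεdef
    have hεnn : 0 ≤ ε := le_trans (norm_nonneg _) hclose
    -- nonnegativity of eigenvalues
    have hDnn : ∀ i, 0 ≤ D i := diag_nonneg hA hU hAeig
    have hEnn : ∀ i, 0 ≤ E i := diag_nonneg hA' hV hA'eig
    -- Weyl inequalities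
    have hW1 : D a - ‖A - A'‖ ≤ E a := weyl_one_sided hU hV hD hE hAeig hA'eig a
    have hW2 : E b - ‖A' - A‖ ≤ D b := weyl_one_sided hV hU hE hD hA'eig hAeig b
    rw [norm_sub_rev] at hW2
    have hEa : D a - ε ≤ E a := by linarith
    have hEb : E b ≤ D b + ε := by linarith
    -- conj forms of the projections
    have hPc : P = U * diagonal (lowMask n k) * Uᵀ := by rw [hP, sub_mul_sub_eq hkn U]
    have hQc : Q = V * diagonal (lowMask n k) * Vᵀ := by rw [hQ, sub_mul_sub_eq hkn V]
    set denom : ℝ := D a - D b - ε with hdenomdef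
    have hdenom : 0 < denom := hgap
    have hβpos1 : 0 < D a - ε := by
      have := hDnn b
      simp only [hdenomdef] at hdenom
      linarith
    -- first application of sin_half
    have R1 : (D a - ε - D b) * ‖(1 - P) * Q‖ ≤ ε := by
      have hα : ∀ i : Fin n, k ≤ (i : ℕ) → |D i| ≤ D b := by
        intro i hi
        rw [abs_of_nonneg (hDnn i)]
        exact hD (by rw [Fin.le_def]; exact hi)
      have hβ : ∀ s : Fin n, (s : ℕ) < k → D a - ε ≤ E s := by
        intro s hs
        refine le_trans hEa (hE ?_)
        rw [Fin.le_def]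
        simp only [hadef]
        omega
      exact sin_half hU hV hAeig hA'eig hPc hQc (hDnn b) hα hβ hβpos1 hclose
    -- second application of sin_half (roles swapped)
    have R2 : (D a - E b) * ‖(1 - Q) * P‖ ≤ ε := by
      have hα : ∀ i : Fin n, k ≤ (i : ℕ) → |E i| ≤ E b := by
        intro i hi
        rw [abs_of_nonneg (hEnn i)]
        exact hE (by rw [Fin.le_def]; exact hi)
      have hβ : ∀ s : Fin n, (s : ℕ) < k → D a ≤ D s := by
        intro s hs
        refine hD ?_
        rw [Fin.le_def]
        simp only [hadef]
        omega
      have hDapos : 0 < D a := by linarith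
      have hnorm' : ‖A' - A‖ ≤ ε := by rw [norm_sub_rev]; exact hclose
      exact sin_half hV hU hA'eig hAeig hQc hPc (hEnn b) hα hβ hDapos hnorm'
    have R2' : denom * ‖(1 - Q) * P‖ ≤ ε := by
      have h6 : denom ≤ D a - E b := by simp only [hdenomdef]; linarith
      calc denom * ‖(1 - Q) * P‖ ≤ (D a - E b) * ‖(1 - Q) * P‖ :=
            mul_le_mul_of_nonneg_right h6 (norm_nonneg _)
        _ ≤ ε := R2
    have R1' : denom * ‖(1 - P) * Q‖ ≤ ε := by
      have h6 : denom = D a - ε - D b := by simp only [hdenomdef]; ring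
      rw [h6]
      exact R1
    -- assemble the projection bound
    have hPt : Pᵀ = P := by rw [hPc]; exact conj_transpose' _
    have hQt : Qᵀ = Q := by rw [hQc]; exact conj_transpose' _
    have hP2 : P * P = P := by rw [hPc, conjd_mul hU, lowMask_idem]
    have hQ2 : Q * Q = Q := by rw [hQc, conjd_mul hV, lowMask_idem]
    have hXle : ‖(1 - P) * Q‖ ≤ ε / denom := by
      rw [le_div_iff₀ hdenom, mul_comm]
      exact R1'
    have hYle : ‖P * (1 - Q)‖ ≤ ε / denom := by
      have htr : P * (1 - Q) = ((1 - Q) * P)ᵀ := by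
        rw [Matrix.transpose_mul, hPt, Matrix.transpose_sub, Matrix.transpose_one, hQt]
      have hnrm : ‖((1 - Q) * P)ᵀ‖ = ‖(1 - Q) * P‖ := by
        rw [← conjT_eq_transpose]
        exact Matrix.l2_opNorm_conjTranspose _
      rw [htr, hnrm, le_div_iff₀ hdenom, mul_comm]
      exact R2'
    exact proj_diff_norm hPt hQt hP2 hQ2 hYle hXle
end
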